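/- Let n ≥ 0 and r ≥ 0 be integers, and let k, m be integers with 1 ≤ k ≤ m. Then Σ_{j=0}^{m} (−1)^j · binom(m, j) · (w_{k, (m+r−j)b})^{(n)}(Y) = 0 in R[Y], where ^{(n)} denotes the n-th derivative with respect to Y. -/
import Mathlib

open Polynomial

noncomputable section

/-- The polynomials `w_{n,λ}`: `w_{0,λ} = 1/(λ+1)` and
`w_{n,λ} = (λ−n+2)·U′·w_{n−1,λ} + U·w_{n−1,λ}′` for `n ≥ 1`. -/
noncomputable def wpoly {R : Type*} [CommRing R] [Algebra ℚ R]
    (U : Polynomial R) : ℕ → ℕ → Polynomial R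
  | 0, lam => Polynomial.C (algebraMap ℚ R (1 / ((lam : ℚ) + 1)))
  | n + 1, lam =>
      ((lam : ℤ) - n + 1) • (Polynomial.derivative U * wpoly U n lam)
        + U * Polynomial.derivative (wpoly U n lam)

/-- alternating m-th finite difference kills polynomials of degree < m -/
lemma alt_sum_eval_eq_zero : ∀ (m : ℕ) (p : Polynomial ℤ), p.natDegree < m →
    ∑ j ∈ Finset.range (m + 1), (-1 : ℤ) ^ j * (m.choose j : ℤ) * p.eval (j : ℤ) = 0 := by
  intro m
  induction m with
  | zero => intro p hp; omega
  | succ m ih =>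
    intro p hp
    set q : Polynomial ℤ := p - p.comp (X + 1) with hq
    have hqd : q = 0 ∨ q.natDegree < p.natDegree := by
      rcases eq_or_ne q 0 with h | h
      · exact Or.inl h
      · right
        rcases Nat.eq_zero_or_pos p.natDegree with h0 | h0
        · obtain ⟨c, rfl⟩ := Polynomial.natDegree_eq_zero.mp h0
          simp [hq] at h
        · have hp0 : p ≠ 0 := by
            intro h'; rw [h'] at h0; simp at h0
          have hXC : ((X : Polynomial ℤ) + 1) = X + C 1 := by simp
          have hX : ((X : Polynomial ℤ) + 1).natDegree ≠ 0 := by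
            rw [hXC, Polynomial.natDegree_X_add_C]; omega
          have hlc : p.leadingCoeff = (p.comp (X + 1)).leadingCoeff := by
            rw [Polynomial.leadingCoeff_comp hX, hXC, Polynomial.leadingCoeff_X_add_C]
            simp
          have hc0 : p.comp (X + 1) ≠ 0 := by
            intro h'
            rw [h', Polynomial.leadingCoeff_zero] at hlc
            exact hp0 (Polynomial.leadingCoeff_eq_zero.mp hlc)
          have hnd : (p.comp (X + 1)).natDegree = p.natDegree := by
            rw [Polynomial.natDegree_comp]
            rw [hXC, Polynomial.natDegree_X_add_C]; ring
          have hdeg : p.degree = (p.comp (X + 1)).degree := by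
            rw [Polynomial.degree_eq_natDegree hp0, Polynomial.degree_eq_natDegree hc0, hnd]
          have := Polynomial.degree_sub_lt hdeg hp0 hlc
          exact Polynomial.natDegree_lt_natDegree h this
    have keval : ∀ j : ℕ, q.eval (j : ℤ) = p.eval (j : ℤ) - p.eval ((j : ℤ) + 1) := by
      intro j; simp [hq, Polynomial.eval_comp]
    have key : ∑ j ∈ Finset.range (m + 1 + 1), (-1:ℤ)^j * ((m+1).choose j : ℤ) * p.eval (j:ℤ)
        = ∑ j ∈ Finset.range (m + 1), (-1:ℤ)^j * (m.choose j : ℤ) * q.eval (j:ℤ) := by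
      have expand : ∑ j ∈ Finset.range (m + 1), (-1:ℤ)^j * (m.choose j : ℤ) * q.eval (j:ℤ)
          = (∑ j ∈ Finset.range (m + 1), (-1:ℤ)^j * (m.choose j : ℤ) * p.eval (j:ℤ))
            - ∑ j ∈ Finset.range (m + 1), (-1:ℤ)^j * (m.choose j : ℤ) * p.eval ((j:ℤ)+1) := by
        rw [← Finset.sum_sub_distrib]
        exact Finset.sum_congr rfl fun j _ => by rw [keval j]; ring
      rw [expand]
      have e2 : ∑ j ∈ Finset.range (m + 1), (-1:ℤ)^j * (m.choose j : ℤ) * p.eval (j:ℤ)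
          = ∑ j ∈ Finset.range (m + 1 + 1), (-1:ℤ)^j * (m.choose j : ℤ) * p.eval (j:ℤ) := by
        conv_rhs => rw [Finset.sum_range_succ]
        simp
      rw [e2, Finset.sum_range_succ' (fun j => (-1:ℤ)^j * (m.choose j : ℤ) * p.eval (j:ℤ)),
        Finset.sum_range_succ' (fun j => (-1:ℤ)^j * ((m+1).choose j : ℤ) * p.eval (j:ℤ))]
      simp only [Nat.choose_succ_succ, Nat.cast_add, Nat.choose_zero_right, Nat.cast_one,
        pow_zero, one_mul, Nat.cast_zero, Nat.cast_succ]
      rw [eq_sub_iff_add_eq, add_right_comm]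
      congr 1
      rw [← Finset.sum_add_distrib]
      refine Finset.sum_congr rfl fun j _ => ?_
      push_cast [Nat.succ_eq_add_one]
      ring
    rw [key]
    rcases hqd with h | h
    · simp [h]
    · exact ih q (by omega)

lemma wpoly_formula {R : Type*} [CommRing R] [Algebra ℚ R] (U : Polynomial R) :
    ∀ k : ℕ, 1 ≤ k → ∃ c : ℕ → Polynomial R,
      ∀ lam : ℕ, wpoly U k lam = ∑ i ∈ Finset.range k, ((lam : ℤ) ^ i) • c i := by
  intro k
  induction k with
  | zero => intro h; omega
  | succ k ih =>
    intro _
    rcases Nat.eq_zero_or_pos k with rfl | hk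
    · refine ⟨fun _ => Polynomial.derivative U, fun lam => ?_⟩
      have h1 : ((lam:ℤ) + 1) • (Polynomial.C (algebraMap ℚ R (1/((lam:ℚ)+1)))) = 1 := by
        have hne : ((lam:ℚ) + 1) ≠ 0 := by positivity
        have h2 : ((lam:ℤ) + 1) • ((1:ℚ)/((lam:ℚ)+1)) = 1 := by
          rw [zsmul_eq_mul]; push_cast; field_simp
        rw [Polynomial.smul_C, ← map_zsmul (algebraMap ℚ R), h2, map_one, Polynomial.C_1]
      show ((lam : ℤ) - (0:ℕ) + 1) • (Polynomial.derivative U * wpoly U 0 lam)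
          + U * Polynomial.derivative (wpoly U 0 lam) = _
      rw [show wpoly U 0 lam = Polynomial.C (algebraMap ℚ R (1 / ((lam : ℚ) + 1))) from rfl]
      simp only [Polynomial.derivative_C, mul_zero, add_zero, Nat.cast_zero, sub_zero]
      rw [mul_comm, ← smul_mul_assoc, h1, one_mul]
      simp
    · obtain ⟨c, hc⟩ := ih hk
      refine ⟨fun i => Polynomial.derivative U * (if i = 0 then 0 else c (i-1))
          + (if i < k then ((1:ℤ) - k) • (Polynomial.derivative U * c i)
              + U * Polynomial.derivative (c i) else 0),
        fun lam => ?_⟩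
      show ((lam : ℤ) - k + 1) • (Polynomial.derivative U * wpoly U k lam)
          + U * Polynomial.derivative (wpoly U k lam) = _
      rw [hc lam]
      simp only [Finset.mul_sum, Polynomial.derivative_sum, Polynomial.derivative_smul,
        Finset.smul_sum, mul_smul_comm, smul_add]
      have hr1 : ∑ i ∈ Finset.range (k+1),
          ((lam:ℤ)^i) • (Polynomial.derivative U * (if i = 0 then 0 else c (i-1)))
          = ∑ i ∈ Finset.range k, ((lam:ℤ)^(i+1)) • (Polynomial.derivative U * c i) := by
        rw [Finset.sum_range_succ' (fun i => ((lam:ℤ)^i) • (Polynomial.derivative U * (if i = 0 then 0 else c (i-1))))]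
        simp
      have hr2 : ∑ i ∈ Finset.range (k+1),
          ((lam:ℤ)^i) • (if i < k then ((1:ℤ) - k) • (Polynomial.derivative U * c i)
              + U * Polynomial.derivative (c i) else 0)
          = ∑ i ∈ Finset.range k, ((lam:ℤ)^i) • (((1:ℤ) - k) • (Polynomial.derivative U * c i)
              + U * Polynomial.derivative (c i)) := by
        rw [Finset.sum_range_succ, if_neg (lt_irrefl k), smul_zero, add_zero]
        exact Finset.sum_congr rfl fun i hi => by rw [if_pos (Finset.mem_range.mp hi)]
      rw [Finset.sum_add_distrib, hr1, hr2, ← Finset.sum_add_distrib, ← Finset.sum_add_distrib]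
      refine Finset.sum_congr rfl fun i _ => ?_
      rw [pow_succ]
      module

/-- for `n, r ≥ 0` and `1 ≤ k ≤ m`,
`Σ_{j=0}^{m} (−1)^j·binom(m,j)·(w_{k,(m+r−j)b})^{(n)} = 0` in `R[Y]`. -/
theorem alternating_sum_wpoly (R : Type*) [CommRing R] [Algebra ℚ R]
    (a b : ℕ) (ha : 2 ≤ a) (hb : 2 ≤ b)
    (u : ℕ → R) (U : Polynomial R)
    (hU : U = ∑ j ∈ Finset.range (a + 1), Polynomial.C (u j) * Polynomial.X ^ j)
    (n r k m : ℕ) (hk : 1 ≤ k) (hkm : k ≤ m) :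
    ∑ j ∈ Finset.range (m + 1),
      ((-1 : ℤ) ^ j * (m.choose j : ℤ)) •
        Polynomial.derivative^[n] (wpoly U k ((m + r - j) * b)) = 0 := by
  obtain ⟨c, hc⟩ := wpoly_formula U k hk
  have step : ∀ j ∈ Finset.range (m + 1),
      ((-1 : ℤ) ^ j * (m.choose j : ℤ)) •
        Polynomial.derivative^[n] (wpoly U k ((m + r - j) * b))
      = ∑ i ∈ Finset.range k,
          ((-1 : ℤ) ^ j * (m.choose j : ℤ)
            * Polynomial.eval (j : ℤ) ((Polynomial.C (((m:ℤ)+r)*b) - Polynomial.C (b:ℤ) * Polynomial.X)^i))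
          • Polynomial.derivative^[n] (c i) := by
    intro j hj
    have hjm : j ≤ m + r := le_trans (Nat.lt_succ_iff.mp (Finset.mem_range.mp hj)) (Nat.le_add_right m r)
    have hev : ∀ i : ℕ,
        Polynomial.eval (j : ℤ) ((Polynomial.C (((m:ℤ)+r)*b) - Polynomial.C (b:ℤ) * Polynomial.X)^i)
        = (((m + r - j) * b : ℕ) : ℤ) ^ i := by
      intro i
      rw [Polynomial.eval_pow]
      congr 1
      push_cast [Nat.cast_sub hjm]
      simp
      ring
    rw [hc, Polynomial.iterate_derivative_sum, Finset.smul_sum]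
    refine Finset.sum_congr rfl fun i _ => ?_
    rw [Polynomial.iterate_derivative_smul, smul_smul, hev i]
  rw [Finset.sum_congr rfl step, Finset.sum_comm]
  refine Finset.sum_eq_zero fun i hi => ?_
  rw [← Finset.sum_smul]
  have hz : ∑ j ∈ Finset.range (m + 1),
      (-1 : ℤ) ^ j * (m.choose j : ℤ)
        * Polynomial.eval (j : ℤ) ((Polynomial.C (((m:ℤ)+r)*b) - Polynomial.C (b:ℤ) * Polynomial.X)^i) = 0 := by
    apply alt_sum_eval_eq_zero
    calc ((Polynomial.C (((m:ℤ)+r)*b) - Polynomial.C (b:ℤ) * Polynomial.X)^i).natDegree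
        ≤ i * (Polynomial.C (((m:ℤ)+r)*b) - Polynomial.C (b:ℤ) * Polynomial.X).natDegree :=
          Polynomial.natDegree_pow_le
      _ ≤ i * 1 := by
          refine Nat.mul_le_mul_left i ?_
          refine le_trans (Polynomial.natDegree_sub_le _ _) (max_le (by rw [Polynomial.natDegree_C]; omega) ?_)
          exact le_trans Polynomial.natDegree_mul_le (by simp)
      _ < m := by
          have := Finset.mem_range.mp hi
          omega
  rw [hz, zero_smul]
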